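/- Let ξ = exp(2πi/3) and let L ⊂ ℂ² be the ℤ-span of λ₁ = (1,0), λ₂ = (ξ,0), λ₃ = (0,1), λ₄ = (0,ξ). The ℂ-linear map g(z₁,z₂) = (ξ·z₁, ξ⁻¹·z₂) maps L onto itself, and the induced map on the torus T = ℂ²/L has exactly nine fixed points: the set {z ∈ ℂ² : g(z) − z ∈ L} equals {(t₁·(ξ+2)/3, t₂·(ξ+2)/3) : t₁, t₂ ∈ ℤ} + L, and the nine classes of (t₁·(ξ+2)/3, t₂·(ξ+2)/3) modulo L for (t₁,t₂) ∈ {0,1,2}² are pairwise distinct. -/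

import Mathlib

noncomputable section

open Complex

/-- `ξ = exp(2πi/3)`. -/
def xi : ℂ := Complex.exp (2 * Real.pi * Complex.I / 3)

/-- The lattice `L = ℤλ₁ + ℤλ₂ + ℤλ₃ + ℤλ₄ ⊂ ℂ²` with
`λ₁ = (1,0)`, `λ₂ = (ξ,0)`, `λ₃ = (0,1)`, `λ₄ = (0,ξ)`. -/
def Ltorus : Submodule ℤ (ℂ × ℂ) :=
  Submodule.span ℤ {((1 : ℂ), (0 : ℂ)), (xi, 0), (0, 1), (0, xi)}

/-- The map `g(z₁,z₂) = (ξ·z₁, ξ⁻¹·z₂)`. -/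
def gmap : ℂ × ℂ → ℂ × ℂ := fun z => (xi * z.1, xi⁻¹ * z.2)

lemma xi_im_pos : 0 < xi.im := by
  have h : xi = Complex.exp ((2 * Real.pi / 3 : ℝ) * Complex.I) := by
    rw [xi]; congr 1; push_cast; ring
  rw [h, Complex.exp_ofReal_mul_I_im]
  apply Real.sin_pos_of_pos_of_lt_pi <;> nlinarith [Real.pi_pos]

lemma xi_pow_three : xi ^ 3 = 1 := by
  have := Complex.exp_nat_mul (2 * Real.pi * Complex.I / 3) 3
  rw [xi, ← this, show (3:ℕ) * (2 * ↑Real.pi * Complex.I / 3) = 2 * Real.pi * Complex.I by push_cast; ring,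
    Complex.exp_two_pi_mul_I]

lemma xi_ne_one : xi ≠ 1 := by
  intro h
  have := xi_im_pos
  rw [h] at this; simp at this

lemma xi_sum : xi ^ 2 + xi + 1 = 0 := by
  have h : (xi - 1) * (xi ^ 2 + xi + 1) = 0 := by
    linear_combination xi_pow_three
  rcases mul_eq_zero.mp h with h | h
  · exact absurd (sub_eq_zero.mp h) xi_ne_one
  · exact h

lemma xi_ne_zero : xi ≠ 0 := by
  intro h
  have := xi_pow_three
  rw [h] at this; simp at this

lemma xi_inv : xi⁻¹ = xi ^ 2 := by
  exact inv_eq_of_mul_eq_one_right (by linear_combination xi_pow_three)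

lemma int_inj (a b : ℤ) (h : (a : ℂ) + (b : ℂ) * xi = 0) : a = 0 ∧ b = 0 := by
  have him := congrArg Complex.im h
  simp [Complex.add_im, Complex.mul_im] at him
  have hb : b = 0 := by
    rcases him with h' | h'
    · exact_mod_cast h'
    · exact absurd h' (ne_of_gt xi_im_pos)
  subst hb
  simp at h
  exact ⟨by exact_mod_cast h, rfl⟩

lemma mem_L (z : ℂ × ℂ) :
    z ∈ Ltorus ↔ ∃ a b c d : ℤ, z = ((a : ℂ) + (b : ℂ) * xi, (c : ℂ) + (d : ℂ) * xi) := by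
  constructor
  · intro hz
    induction hz using Submodule.span_induction with
    | mem x hx =>
      simp only [Set.mem_insert_iff, Set.mem_singleton_iff] at hx
      rcases hx with h | h | h | h <;> subst h
      · exact ⟨1, 0, 0, 0, by norm_num⟩
      · exact ⟨0, 1, 0, 0, by norm_num⟩
      · exact ⟨0, 0, 1, 0, by norm_num⟩
      · exact ⟨0, 0, 0, 1, by norm_num⟩
    | zero => exact ⟨0, 0, 0, 0, Prod.ext (by simp) (by simp)⟩
    | add x y _ _ hx hy =>
      obtain ⟨a, b, c, d, rfl⟩ := hx; obtain ⟨a', b', c', d', rfl⟩ := hy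
      refine ⟨a + a', b + b', c + c', d + d', ?_⟩
      simp only [Prod.mk_add_mk, Prod.mk.injEq]
      push_cast; constructor <;> ring
    | smul r x _ hx =>
      obtain ⟨a, b, c, d, rfl⟩ := hx
      refine ⟨r * a, r * b, r * c, r * d, ?_⟩
      simp only [Prod.smul_mk, zsmul_eq_mul, Prod.mk.injEq]
      push_cast; constructor <;> ring
  · rintro ⟨a, b, c, d, rfl⟩
    have h1 : ((1 : ℂ), (0 : ℂ)) ∈ Ltorus := Submodule.subset_span (by simp)
    have h2 : (xi, (0 : ℂ)) ∈ Ltorus := Submodule.subset_span (by simp)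
    have h3 : ((0 : ℂ), (1 : ℂ)) ∈ Ltorus := Submodule.subset_span (by simp)
    have h4 : ((0 : ℂ), xi) ∈ Ltorus := Submodule.subset_span (by simp)
    have key := Submodule.add_mem _ (Submodule.add_mem _ (Submodule.add_mem _
      (Submodule.smul_mem _ a h1) (Submodule.smul_mem _ b h2))
      (Submodule.smul_mem _ c h3)) (Submodule.smul_mem _ d h4)
    have heq : (((a : ℂ) + (b : ℂ) * xi, (c : ℂ) + (d : ℂ) * xi) : ℂ × ℂ)
        = a • ((1 : ℂ), (0 : ℂ)) + b • (xi, (0 : ℂ)) + c • ((0 : ℂ), (1 : ℂ)) + d • ((0 : ℂ), xi) := by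
      simp only [Prod.smul_mk, zsmul_eq_mul, Prod.mk_add_mk, Prod.mk.injEq]
      constructor <;> ring
    rw [heq]; exact key

lemma xi_sub_one_ne : xi - 1 ≠ 0 := sub_ne_zero.mpr xi_ne_one

lemma xi_sq_sub_one_ne : xi ^ 2 - 1 ≠ 0 := by
  intro h
  have h2 : xi ^ 2 = 1 := sub_eq_zero.mp h
  have : xi = 1 := by
    have := xi_pow_three
    calc xi = xi * xi ^ 2 := by rw [h2]; ring
    _ = 1 := by linear_combination this
  exact xi_ne_one this

theorem statement0 :
    -- g maps L onto itself
    (gmap '' (Ltorus : Set (ℂ × ℂ)) = (Ltorus : Set (ℂ × ℂ))) ∧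
    -- the set of points fixed modulo L by the induced map on T = ℂ²/L is
    -- {(t₁·(ξ+2)/3, t₂·(ξ+2)/3) : t₁, t₂ ∈ ℤ} + L
    ({z : ℂ × ℂ | gmap z - z ∈ Ltorus} =
      {w : ℂ × ℂ | ∃ t₁ t₂ : ℤ, ∃ l ∈ Ltorus,
        w = (((t₁ : ℂ) * (xi + 2) / 3, (t₂ : ℂ) * (xi + 2) / 3) : ℂ × ℂ) + l}) ∧
    -- the nine classes modulo L for (t₁,t₂) ∈ {0,1,2}² are pairwise distinct
    (∀ t s : Fin 3 × Fin 3,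
      ((((t.1 : ℕ) : ℂ) * (xi + 2) / 3 - ((s.1 : ℕ) : ℂ) * (xi + 2) / 3,
        ((t.2 : ℕ) : ℂ) * (xi + 2) / 3 - ((s.2 : ℕ) : ℂ) * (xi + 2) / 3) : ℂ × ℂ) ∈ Ltorus →
      t = s) := by
  refine ⟨?_, ?_, ?_⟩
  · -- part 1
    ext z
    simp only [Set.mem_image, SetLike.mem_coe]
    constructor
    · rintro ⟨w, hw, rfl⟩
      obtain ⟨a, b, c, d, rfl⟩ := (mem_L w).mp hw
      rw [mem_L]
      refine ⟨-b, a - b, d - c, -c, ?_⟩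
      simp only [gmap, xi_inv, Prod.mk.injEq]
      push_cast
      constructor
      · linear_combination (b : ℂ) * xi_sum
      · linear_combination (d : ℂ) * xi_pow_three + (c : ℂ) * xi_sum
    · intro hz
      obtain ⟨a, b, c, d, rfl⟩ := (mem_L z).mp hz
      refine ⟨(((b : ℂ) - a) + (-a : ℤ) * xi, ((-d : ℤ) : ℂ) + ((c : ℂ) - d) * xi), ?_, ?_⟩
      · rw [mem_L]
        exact ⟨b - a, -a, -d, c - d, by push_cast; ring_nf⟩
      · simp only [gmap, xi_inv, Prod.mk.injEq]
        push_cast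
        constructor
        · linear_combination (-(a : ℂ)) * xi_sum
        · linear_combination ((c : ℂ) - d) * xi_pow_three + (-(d : ℂ)) * xi_sum
  · -- part 2
    ext z
    simp only [Set.mem_setOf_eq]
    constructor
    · intro hz
      obtain ⟨a, b, c, d, heq⟩ := (mem_L _).mp hz
      have h1 := congrArg Prod.fst heq
      have h2 := congrArg Prod.snd heq
      simp only [gmap, Prod.fst_sub, Prod.snd_sub] at h1 h2
      rw [xi_inv] at h2
      refine ⟨-(a + b), c - 2 * d, (((b : ℤ) : ℂ), (((d - c : ℤ)) : ℂ)), ?_, ?_⟩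
      · rw [mem_L]; exact ⟨b, 0, d - c, 0, by push_cast; simp⟩
      · have e1 : (xi - 1) * z.1 = (xi - 1) * ((-(a + b) : ℤ) * (xi + 2) / 3 + (b : ℂ)) := by
          push_cast
          linear_combination h1 + (((a : ℂ) + b) / 3) * xi_sum
        have e2 : (xi ^ 2 - 1) * z.2
            = (xi ^ 2 - 1) * (((c - 2 * d : ℤ) : ℂ) * (xi + 2) / 3 + ((d - c : ℤ) : ℂ)) := by
          push_cast
          linear_combination h2 + ((-(c : ℂ) / 3 + 2 * d / 3)) * xi_pow_three
            + (((c : ℂ) + d) / 3) * xi_sum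
        have f1 := mul_left_cancel₀ xi_sub_one_ne e1
        have f2 := mul_left_cancel₀ xi_sq_sub_one_ne e2
        rw [Prod.ext_iff]
        constructor
        · simpa using f1
        · simpa using f2
    · rintro ⟨t1, t2, l, hl, rfl⟩
      obtain ⟨m, n, p, q, rfl⟩ := (mem_L l).mp hl
      rw [mem_L]
      refine ⟨-t1 - m - n, m - 2 * n, -t2 - 2 * p + q, -t2 - p - q, ?_⟩
      simp only [gmap, xi_inv, Prod.mk_add_mk, Prod.fst, Prod.snd, Prod.mk_sub_mk, Prod.mk.injEq]
      push_cast
      constructor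
      · linear_combination ((t1 : ℂ) / 3 + n) * xi_sum
      · linear_combination ((t2 : ℂ) / 3 + q) * xi_pow_three + (2 * (t2 : ℂ) / 3 + p) * xi_sum
  · -- part 3
    intro t s h
    obtain ⟨a, b, c, d, heq⟩ := (mem_L _).mp h
    have h1 := congrArg Prod.fst heq
    have h2 := congrArg Prod.snd heq
    simp only at h1 h2
    have k1 : ((2 * (t.1 : ℤ) - 2 * (s.1 : ℤ) - 3 * a : ℤ) : ℂ)
        + (((t.1 : ℤ) - (s.1 : ℤ) - 3 * b : ℤ) : ℂ) * xi = 0 := by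
      push_cast
      linear_combination 3 * h1
    have k2 : ((2 * (t.2 : ℤ) - 2 * (s.2 : ℤ) - 3 * c : ℤ) : ℂ)
        + (((t.2 : ℤ) - (s.2 : ℤ) - 3 * d : ℤ) : ℂ) * xi = 0 := by
      push_cast
      linear_combination 3 * h2
    obtain ⟨k1a, k1b⟩ := int_inj _ _ k1
    obtain ⟨k2a, k2b⟩ := int_inj _ _ k2
    have ht1 := t.1.isLt; have hs1 := s.1.isLt
    have ht2 := t.2.isLt; have hs2 := s.2.isLt
    have : (t.1 : ℕ) = (s.1 : ℕ) ∧ (t.2 : ℕ) = (s.2 : ℕ) := by omega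
    exact Prod.ext (Fin.ext this.1) (Fin.ext this.2)
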